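/- For every pointed graph G restricted by a pebbling restriction [[v := b]] (b ∈ {0,1}), the restricted clause set satisfies Peb(G)↾[[v := b]] = Peb(G[v := b]), where G[v := 0] = G↾v (the subgraph of vertices from which v is reachable, with sink v) and G[v := 1] is obtained by deleting v and restricting to vertices from which the sink remains reachable. -/

import Mathlib

attribute [local instance] Classical.propDecidable

/-- A clause: a finite set of literals, a literal being a variable with a sign. -/
abbrev Clause := Finset (ℕ × Bool)

/-- A total truth assignment satisfies a clause if it makes some literal true. -/
def clauseSat (a : ℕ → Bool) (C : Clause) : Prop :=
  ∃ l ∈ C, (if l.2 then a l.1 else !(a l.1)) = true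

/-- A set of clauses is unsatisfiable (contradictory). -/
def Unsat (S : Set Clause) : Prop := ∀ a : ℕ → Bool, ¬ ∀ C ∈ S, clauseSat a C

/-- A directed graph with a designated sink vertex. -/
structure PGraph where
  verts : Finset ℕ
  edges : Finset (ℕ × ℕ)
  sink : ℕ

def edgeRel (G : PGraph) (u v : ℕ) : Prop := (u, v) ∈ G.edges

def Reach (G : PGraph) (u v : ℕ) : Prop := Relation.ReflTransGen (edgeRel G) u v

noncomputable def preds (G : PGraph) (v : ℕ) : Finset ℕ :=
  (G.edges.filter (fun e => e.2 = v)).image Prod.fst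

/-- A pointed graph: a DAG whose edges join vertices, indegrees at most 2, with a
unique sink belonging to the graph and reachable from every vertex. -/
def IsPointed (G : PGraph) : Prop :=
  G.sink ∈ G.verts ∧
  (∀ e ∈ G.edges, e.1 ∈ G.verts ∧ e.2 ∈ G.verts) ∧
  (∀ v, ¬ Relation.TransGen (edgeRel G) v v) ∧
  (∀ v ∈ G.verts, (preds G v).card ≤ 2) ∧
  (∀ v ∈ G.verts, Reach G v G.sink)

/-- The clause of the pebbling formula associated with a vertex: the negations of its
predecessors, together with the vertex itself positively (omitted at the sink, which
plays the role of ⊥). Sources thus get unit clauses. -/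
noncomputable def ClauseOf (G : PGraph) (v : ℕ) : Clause :=
  ((preds G v).image (fun u => (u, false))) ∪
    (if v = G.sink then (∅ : Clause) else {(v, true)})

/-- The pebbling formula Peb(G). -/
noncomputable def Peb (G : PGraph) : Set Clause := (fun v => ClauseOf G v) '' ↑G.verts

/-- G[v:=0]: the induced subgraph on the vertices from which v is reachable, with v
as the new sink. -/
noncomputable def restrict0 (G : PGraph) (v : ℕ) : PGraph where
  verts := G.verts.filter (fun u => Reach G u v)
  edges := G.edges.filter (fun e => Reach G e.1 v ∧ Reach G e.2 v)
  sink := v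

/-- Deletion of a vertex together with all edges entering or leaving it. -/
def deleteVert (G : PGraph) (v : ℕ) : PGraph where
  verts := G.verts.erase v
  edges := G.edges.filter (fun e => e.1 ≠ v ∧ e.2 ≠ v)
  sink := G.sink

/-- Restriction of a graph to the vertices from which the sink is reachable. -/
noncomputable def restrictSink (G : PGraph) : PGraph where
  verts := G.verts.filter (fun u => Reach G u G.sink)
  edges := G.edges.filter (fun e => Reach G e.1 G.sink ∧ Reach G e.2 G.sink)
  sink := G.sink

/-- G[v:=1]: delete v and all incident edges, then restrict to the vertices from which
the original sink remains reachable. -/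
noncomputable def restrict1 (G : PGraph) (v : ℕ) : PGraph := restrictSink (deleteVert G v)

/-- Partial assignments. -/
def PAssign := ℕ → Option Bool

/-- Restriction of a set of clauses by a partial assignment: satisfied clauses are
removed, and falsified literals are deleted from the remaining clauses. -/
noncomputable def restrictSet (α : PAssign) (S : Set Clause) : Set Clause :=
  { D | ∃ C ∈ S, (¬ ∃ l ∈ C, α l.1 = some l.2) ∧ D = C.filter (fun l => α l.1 = none) }

/-- One step of an implicational chain: a occurs negatively and b positively in some
clause of S. -/
def ImpStep (S : Set Clause) (a b : ℕ) : Prop :=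
  ∃ C ∈ S, (a, false) ∈ C ∧ (b, true) ∈ C

/-- There is an implicational chain from u to ⊥ in S (⊥ counting as a positive
occurrence in any purely negative clause). -/
def ChainToBot (S : Set Clause) (u : ℕ) : Prop :=
  ∃ w, Relation.ReflTransGen (ImpStep S) u w ∧
    ∃ C ∈ S, (w, false) ∈ C ∧ ∀ l ∈ C, l.2 = false

/-- The pebbling restriction [[v := 1]]: set v to 1, then set to 1 every variable from
which no implicational chain to ⊥ remains in the restricted clause set. -/
noncomputable def assign1 (G : PGraph) (v : ℕ) : PAssign := fun u =>
  if u = v then some true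
  else if ¬ ChainToBot
      (restrictSet (fun w => if w = v then some true else none) (Peb G)) u then
    some true
  else none

/-- A directed path from v to the sink of G. -/
def IsPathToSink (G : PGraph) (π : List ℕ) (v : ℕ) : Prop :=
  π.head? = some v ∧ π.getLast? = some G.sink ∧
  List.Chain' (edgeRel G) π ∧ ∀ u ∈ π, u ∈ G.verts

/-- The pebbling restriction [[v := 0]] determined by a path π from v to the sink:
set all vertices on π to 0, and set to 1 every vertex not on π from which v is not
reachable. -/
noncomputable def assign0 (G : PGraph) (v : ℕ) (π : List ℕ) : PAssign := fun u =>
  if u ∈ π then some false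
  else if ¬ Reach G u v then some true
  else none

section Helpers

lemma mem_preds {G : PGraph} {u w : ℕ} : u ∈ preds G w ↔ (u, w) ∈ G.edges := by
  simp only [preds, Finset.mem_image, Finset.mem_filter]
  constructor
  · rintro ⟨⟨a, b⟩, ⟨he, rfl⟩, rfl⟩; exact he
  · intro h; exact ⟨(u, w), ⟨h, rfl⟩, rfl⟩

lemma mem_clauseOf {G : PGraph} {l : ℕ × Bool} {w : ℕ} :
    l ∈ ClauseOf G w ↔ (l.2 = false ∧ (l.1, w) ∈ G.edges) ∨ (w ≠ G.sink ∧ l = (w, true)) := by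
  obtain ⟨a, b⟩ := l
  simp only [ClauseOf, Finset.mem_union, Finset.mem_image]
  split_ifs with h
  · simp only [h, Finset.notMem_empty, or_false, mem_preds, Prod.ext_iff, ne_eq,
      not_true_eq_false, false_and, or_false]
    constructor
    · rintro ⟨u, hu, h1, h2⟩
      cases h1; cases h2; exact ⟨rfl, hu⟩
    · rintro ⟨rfl, hu⟩; exact ⟨a, hu, rfl, rfl⟩
  · simp only [Finset.mem_singleton, Prod.ext_iff, ne_eq, h, not_false_eq_true, true_and]
    constructor
    · rintro (⟨u, hu, h1, h2⟩ | ⟨rfl, rfl⟩)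
      · rw [mem_preds] at hu; cases h1; cases h2; exact Or.inl ⟨rfl, hu⟩
      · exact Or.inr ⟨rfl, rfl⟩
    · rintro (⟨rfl, hu⟩ | ⟨h1, h2⟩)
      · exact Or.inl ⟨a, mem_preds.mpr hu, rfl, rfl⟩
      · exact Or.inr ⟨h1, h2⟩

lemma reach_antisymm {G : PGraph} (hG : IsPointed G) {a b : ℕ}
    (h1 : Reach G a b) (h2 : Reach G b a) : a = b := by
  by_contra hne
  rcases (Relation.reflTransGen_iff_eq_or_transGen.mp h1) with rfl | ht
  · exact hne rfl
  · exact hG.2.2.1 b (Relation.TransGen.trans_right h2 ht)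

lemma edge_ne_sink {G : PGraph} (hG : IsPointed G) {a b : ℕ}
    (h : (a, b) ∈ G.edges) : a ≠ G.sink := by
  rintro rfl
  have hb : b ∈ G.verts := (hG.2.1 _ h).2
  exact hG.2.2.1 _ ((Relation.TransGen.head' h (hG.2.2.2.2 b hb)))

lemma chain_reach {G : PGraph} : ∀ {l : List ℕ} {a u : ℕ},
    List.Chain (edgeRel G) a l → u ∈ l → Reach G a u := by
  intro l
  induction l with
  | nil => intro a u _ hu; simp at hu
  | cons b t ih =>
    intro a u hc hu
    rcases List.chain_cons.mp hc with ⟨hab, hbt⟩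
    rcases List.mem_cons.mp hu with rfl | hu
    · exact Relation.ReflTransGen.single hab
    · exact Relation.ReflTransGen.head hab (ih hbt hu)

lemma chain_pred {G : PGraph} : ∀ {l : List ℕ} {a u : ℕ},
    List.Chain (edgeRel G) a l → u ∈ l → ∃ p ∈ a :: l, (p, u) ∈ G.edges := by
  intro l
  induction l with
  | nil => intro a u _ hu; simp at hu
  | cons b t ih =>
    intro a u hc hu
    rcases List.chain_cons.mp hc with ⟨hab, hbt⟩
    rcases List.mem_cons.mp hu with rfl | hu
    · exact ⟨a, by simp, hab⟩
    · rcases ih hbt hu with ⟨p, hp, hpe⟩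
      refine ⟨p, ?_, hpe⟩
      rcases List.mem_cons.mp hp with rfl | h
      · simp
      · simp [h]

end Helpers

section Part0
set_option linter.unusedSectionVars false

variable {G : PGraph} (hG : IsPointed G) {v : ℕ} (hv : v ∈ G.verts) (hvs : v ≠ G.sink)
variable {π : List ℕ} (hπ : IsPathToSink G π v)

include hπ in
lemma path_cons : ∃ t, π = v :: t := by
  cases π with
  | nil => simp [IsPathToSink] at hπ
  | cons a t =>
    obtain ⟨h1, _, _, _⟩ := hπ
    simp at h1; exact ⟨t, by rw [h1]⟩

include hπ in
lemma path_reach {u : ℕ} (hu : u ∈ π) : Reach G v u := by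
  obtain ⟨t, rfl⟩ := path_cons hπ
  rcases List.mem_cons.mp hu with rfl | hu
  · exact Relation.ReflTransGen.refl
  · exact chain_reach hπ.2.2.1 hu

include hG hπ in
lemma path_eq_v {u : ℕ} (hu : u ∈ π) (hr : Reach G u v) : u = v :=
  reach_antisymm hG hr (path_reach hπ hu)

include hπ in
lemma sink_mem_path : G.sink ∈ π := by
  have := hπ.2.1
  have hne : π ≠ [] := by rintro rfl; simp at this
  rw [List.getLast?_eq_getLast hne] at this
  have h2 := List.getLast_mem hne
  rwa [Option.some_inj.mp this] at h2

include hG hπ in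
lemma path_pred {u : ℕ} (hu : u ∈ π) (hne : u ≠ v) : ∃ p ∈ π, (p, u) ∈ G.edges := by
  obtain ⟨t, rfl⟩ := path_cons hπ
  rcases List.mem_cons.mp hu with rfl | hu
  · exact absurd rfl hne
  · exact chain_pred hπ.2.2.1 hu

lemma assign0_eq_none {u : ℕ} : assign0 G v π u = none ↔ u ∉ π ∧ Reach G u v := by
  simp only [assign0]; split_ifs <;> simp_all

lemma assign0_eq_false {u : ℕ} : assign0 G v π u = some false ↔ u ∈ π := by
  simp only [assign0]; split_ifs <;> simp_all

lemma assign0_eq_true {u : ℕ} : assign0 G v π u = some true ↔ u ∉ π ∧ ¬ Reach G u v := by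
  simp only [assign0]; split_ifs <;> simp_all

include hG hv hvs hπ in
lemma unsat0_iff {w : ℕ} (hw : w ∈ G.verts) :
    (¬ ∃ l ∈ ClauseOf G w, assign0 G v π l.1 = some l.2) ↔ Reach G w v := by
  constructor
  · intro h
    by_contra hr
    apply h
    by_cases hwπ : w ∈ π
    · have hne : w ≠ v := fun h' => hr (h' ▸ Relation.ReflTransGen.refl)
      obtain ⟨p, hp, hpe⟩ := path_pred hG hπ hwπ hne
      exact ⟨(p, false), mem_clauseOf.mpr (Or.inl ⟨rfl, hpe⟩), assign0_eq_false.mpr hp⟩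
    · have hws : w ≠ G.sink := fun h' => hwπ (h' ▸ sink_mem_path hπ)
      exact ⟨(w, true), mem_clauseOf.mpr (Or.inr ⟨hws, rfl⟩), assign0_eq_true.mpr ⟨hwπ, hr⟩⟩
  · rintro hr ⟨l, hl, hsat⟩
    rcases mem_clauseOf.mp hl with ⟨h2, he⟩ | ⟨hws, rfl⟩
    · rw [h2] at hsat
      have hmem : l.1 ∈ π := assign0_eq_false.mp hsat
      have hrl : Reach G l.1 v := Relation.ReflTransGen.head he hr
      have : l.1 = v := path_eq_v hG hπ hmem hrl
      rw [this] at he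
      exact hG.2.2.1 v (Relation.TransGen.head' he hr)
    · rcases assign0_eq_true.mp hsat with ⟨h1, h2⟩
      exact h2 hr

include hG hv hvs hπ in
lemma filter0_eq {w : ℕ} (hw : w ∈ G.verts) (hr : Reach G w v) :
    (ClauseOf G w).filter (fun l => assign0 G v π l.1 = none) = ClauseOf (restrict0 G v) w := by
  have hws : w ≠ G.sink := by
    rintro rfl
    exact hvs (reach_antisymm hG (hG.2.2.2.2 v hv) hr)
  ext l
  simp only [Finset.mem_filter, mem_clauseOf, assign0_eq_none]
  have hedge : ∀ u : ℕ, ((u, w) ∈ (restrict0 G v).edges ↔ ((u, w) ∈ G.edges ∧ Reach G u v)) := by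
    intro u
    simp only [restrict0, Finset.mem_filter]
    tauto
  have hsink : (restrict0 G v).sink = v := rfl
  constructor
  · rintro ⟨⟨h2, he⟩ | ⟨_, rfl⟩, hnπ, hrl⟩
    · exact Or.inl ⟨h2, (hedge l.1).mpr ⟨he, hrl⟩⟩
    · refine Or.inr ⟨?_, rfl⟩
      rw [hsink]
      rintro rfl
      exact hnπ (by obtain ⟨t, rfl⟩ := path_cons hπ; simp)
  · rintro (⟨h2, he⟩ | ⟨hne, rfl⟩)
    · rw [hedge] at he
      obtain ⟨he, hrl⟩ := he
      refine ⟨Or.inl ⟨h2, he⟩, ?_, hrl⟩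
      intro hmem
      have : l.1 = v := path_eq_v hG hπ hmem hrl
      rw [this] at he
      exact hG.2.2.1 v (Relation.TransGen.head' he hr)
    · rw [hsink] at hne
      refine ⟨Or.inr ⟨hws, rfl⟩, ?_, hr⟩
      intro hmem
      exact hne (path_eq_v hG hπ hmem hr)

include hG hv hvs hπ in
lemma part0 : restrictSet (assign0 G v π) (Peb G) = Peb (restrict0 G v) := by
  ext D
  constructor
  · rintro ⟨C, hC, hunsat, rfl⟩
    obtain ⟨w, hw, rfl⟩ := hC
    have hw' : w ∈ G.verts := hw
    have hr : Reach G w v := (unsat0_iff hG hv hvs hπ hw').mp hunsat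
    refine ⟨w, ?_, (filter0_eq hG hv hvs hπ hw' hr).symm⟩
    simp only [restrict0, Finset.coe_filter, Set.mem_setOf_eq]
    exact ⟨hw', hr⟩
  · rintro ⟨w, hw, rfl⟩
    simp only [restrict0, Finset.coe_filter, Set.mem_setOf_eq] at hw
    obtain ⟨hw', hr⟩ := hw
    exact ⟨ClauseOf G w, ⟨w, hw', rfl⟩, (unsat0_iff hG hv hvs hπ hw').mpr hr,
      (filter0_eq hG hv hvs hπ hw' hr).symm⟩

end Part0
section Part1
set_option linter.unusedSectionVars false

variable {G : PGraph} (hG : IsPointed G) {v : ℕ} (hv : v ∈ G.verts) (hvs : v ≠ G.sink)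

include hvs in
lemma mem_S1 {D : Clause} :
    D ∈ restrictSet (fun w => if w = v then some true else none) (Peb G) ↔
      ∃ w ∈ G.verts, w ≠ v ∧ D = (ClauseOf G w).filter (fun l => l.1 ≠ v) := by
  have hbsome : ∀ (u : ℕ) (b : Bool),
      ((fun w => if w = v then some true else none) u = some b) ↔ (u = v ∧ b = true) := by
    intro u b; by_cases h : u = v <;> simp [h, eq_comm]
  have hfilt : ∀ C : Clause,
      C.filter (fun l => (fun w => if w = v then some true else none) l.1 = none) =
        C.filter (fun l => l.1 ≠ v) := by
    intro C
    apply Finset.filter_congr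
    intro l _
    by_cases h : l.1 = v <;> simp [h]
  constructor
  · rintro ⟨C, ⟨w, hw, rfl⟩, hunsat, rfl⟩
    refine ⟨w, hw, ?_, hfilt _⟩
    rintro rfl
    exact hunsat ⟨(w, true), mem_clauseOf.mpr (Or.inr ⟨hvs, rfl⟩),
      (hbsome w true).mpr ⟨rfl, rfl⟩⟩
  · rintro ⟨w, hw, hwv, rfl⟩
    refine ⟨ClauseOf G w, ⟨w, hw, rfl⟩, ?_, (hfilt _).symm⟩
    rintro ⟨l, hl, hsat⟩
    obtain ⟨h1, h2⟩ := (hbsome l.1 l.2).mp hsat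
    rcases mem_clauseOf.mp hl with ⟨hf, _⟩ | ⟨_, heq⟩
    · rw [hf] at h2; simp at h2
    · apply hwv
      rw [← h1, heq]

include hG hvs in
lemma impStep1 {a b : ℕ} :
    ImpStep (restrictSet (fun w => if w = v then some true else none) (Peb G)) a b ↔
      (a, b) ∈ G.edges ∧ a ≠ v ∧ b ≠ v ∧ b ≠ G.sink := by
  constructor
  · rintro ⟨D, hD, ha, hb⟩
    rcases (mem_S1 hvs).mp hD with ⟨w, hw, hwv, rfl⟩
    rw [Finset.mem_filter] at ha hb
    obtain ⟨ha1, ha2⟩ := ha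
    obtain ⟨hb1, hb2⟩ := hb
    rcases mem_clauseOf.mp hb1 with ⟨h2, _⟩ | ⟨hws, heq⟩
    · simp at h2
    · have hbw : b = w := by simpa using congrArg Prod.fst heq
      subst hbw
      rcases mem_clauseOf.mp ha1 with ⟨_, he⟩ | ⟨_, heq'⟩
      · exact ⟨he, by simpa using ha2, by simpa using hb2, hws⟩
      · simp [Prod.ext_iff] at heq'
  · rintro ⟨he, hav, hbv, hbs⟩
    have hbverts : b ∈ G.verts := (hG.2.1 _ he).2
    refine ⟨(ClauseOf G b).filter (fun l => l.1 ≠ v),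
      (mem_S1 hvs).mpr ⟨b, hbverts, hbv, rfl⟩, ?_, ?_⟩
    · exact Finset.mem_filter.mpr ⟨mem_clauseOf.mpr (Or.inl ⟨rfl, he⟩), by simpa using hav⟩
    · exact Finset.mem_filter.mpr ⟨mem_clauseOf.mpr (Or.inr ⟨hbs, rfl⟩), by simpa using hbv⟩

include hG hvs in
lemma allneg1 {w' : ℕ} :
    (∃ C ∈ restrictSet (fun w => if w = v then some true else none) (Peb G),
        (w', false) ∈ C ∧ ∀ l ∈ C, l.2 = false) ↔ (w', G.sink) ∈ G.edges ∧ w' ≠ v := by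
  constructor
  · rintro ⟨C, hC, hmem, hneg⟩
    rcases (mem_S1 hvs).mp hC with ⟨w, hw, hwv, rfl⟩
    have hws : w = G.sink := by
      by_contra hws
      have : ((w, true) : ℕ × Bool) ∈ (ClauseOf G w).filter (fun l => l.1 ≠ v) :=
        Finset.mem_filter.mpr ⟨mem_clauseOf.mpr (Or.inr ⟨hws, rfl⟩), by simpa using hwv⟩
      simpa using hneg _ this
    subst hws
    rw [Finset.mem_filter] at hmem
    obtain ⟨h1, h2⟩ := hmem
    rcases mem_clauseOf.mp h1 with ⟨_, he⟩ | ⟨hc, _⟩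
    · exact ⟨he, by simpa using h2⟩
    · exact absurd rfl hc
  · rintro ⟨he, hwv⟩
    refine ⟨(ClauseOf G G.sink).filter (fun l => l.1 ≠ v),
      (mem_S1 hvs).mpr ⟨G.sink, hG.1, Ne.symm hvs, rfl⟩, ?_, ?_⟩
    · exact Finset.mem_filter.mpr ⟨mem_clauseOf.mpr (Or.inl ⟨rfl, he⟩), by simpa using hwv⟩
    · intro l hl
      rcases mem_clauseOf.mp (Finset.mem_filter.mp hl).1 with ⟨h2, _⟩ | ⟨hc, _⟩
      · exact h2
      · exact absurd rfl hc

lemma mem_delete_edges {a b : ℕ} :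
    (a, b) ∈ (deleteVert G v).edges ↔ (a, b) ∈ G.edges ∧ a ≠ v ∧ b ≠ v := by
  simp [deleteVert]

include hG hvs in
lemma chainToBot1 {u : ℕ} :
    ChainToBot (restrictSet (fun w => if w = v then some true else none) (Peb G)) u ↔
      u ≠ v ∧ u ≠ G.sink ∧ Reach (deleteVert G v) u G.sink := by
  constructor
  · rintro ⟨w', hchain, hterm⟩
    rw [allneg1 hG hvs] at hterm
    obtain ⟨he, hwv⟩ := hterm
    have hreach : Reach (deleteVert G v) u G.sink := by
      have h1 : Relation.ReflTransGen (edgeRel (deleteVert G v)) u w' := by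
        refine Relation.ReflTransGen.mono ?_ _ _ hchain
        intro a b hab
        rcases (impStep1 hG hvs).mp hab with ⟨h1, h2, h3, _⟩
        exact mem_delete_edges.mpr ⟨h1, h2, h3⟩
      exact h1.tail (mem_delete_edges.mpr ⟨he, hwv, Ne.symm hvs⟩)
    rcases Relation.ReflTransGen.cases_head hchain with rfl | ⟨c, hstep, _⟩
    · exact ⟨hwv, edge_ne_sink hG he, hreach⟩
    · rcases (impStep1 hG hvs).mp hstep with ⟨h1, h2, _, _⟩
      exact ⟨h2, edge_ne_sink hG h1, hreach⟩
  · rintro ⟨huv, hus, hreach⟩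
    have key : ∀ a : ℕ, Reach (deleteVert G v) a G.sink → a ≠ G.sink →
        ∃ w', Relation.ReflTransGen
          (ImpStep (restrictSet (fun w => if w = v then some true else none) (Peb G))) a w' ∧
          (w', G.sink) ∈ G.edges ∧ w' ≠ v := by
      intro a h
      induction h using Relation.ReflTransGen.head_induction_on with
      | refl => intro h; exact absurd rfl h
      | @head a c hab hbs ih =>
        intro _
        have hab' : (a, c) ∈ (deleteVert G v).edges := hab
        rw [mem_delete_edges] at hab'
        obtain ⟨he, hav, hcv⟩ := hab'
        by_cases hcs : c = G.sink
        · subst hcs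
          exact ⟨a, Relation.ReflTransGen.refl, he, hav⟩
        · obtain ⟨w', h1, h2, h3⟩ := ih hcs
          exact ⟨w', h1.head ((impStep1 hG hvs).mpr ⟨he, hav, hcv, hcs⟩), h2, h3⟩
    obtain ⟨w', h1, h2, h3⟩ := key u hreach hus
    exact ⟨w', h1, (allneg1 hG hvs).mpr ⟨h2, h3⟩⟩

include hG hvs in
lemma assign1_eq_none {u : ℕ} :
    assign1 G v u = none ↔ u ≠ v ∧ u ≠ G.sink ∧ Reach (deleteVert G v) u G.sink := by
  have h : assign1 G v u = none ↔ (u ≠ v ∧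
      ChainToBot (restrictSet (fun w => if w = v then some true else none) (Peb G)) u) := by
    unfold assign1
    split_ifs with h1 h2 <;> simp_all
  rw [h, chainToBot1 hG hvs]
  tauto

include hG hvs in
lemma assign1_ne_false {u : ℕ} : assign1 G v u ≠ some false := by
  unfold assign1
  split_ifs <;> simp

lemma mem_restrict1_verts {w : ℕ} :
    w ∈ (restrict1 G v).verts ↔ w ∈ G.verts ∧ w ≠ v ∧ Reach (deleteVert G v) w G.sink := by
  unfold restrict1 restrictSink deleteVert
  simp only [Finset.mem_filter, Finset.mem_erase]
  tauto

lemma mem_restrict1_edges {a b : ℕ} :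
    (a, b) ∈ (restrict1 G v).edges ↔ (a, b) ∈ G.edges ∧ a ≠ v ∧ b ≠ v ∧
      Reach (deleteVert G v) a G.sink ∧ Reach (deleteVert G v) b G.sink := by
  unfold restrict1 restrictSink deleteVert
  simp only [Finset.mem_filter]
  tauto

include hG hv hvs in
lemma unsat1_iff {w : ℕ} (hw : w ∈ G.verts) :
    (¬ ∃ l ∈ ClauseOf G w, assign1 G v l.1 = some l.2) ↔
      (w ≠ v ∧ Reach (deleteVert G v) w G.sink) := by
  constructor
  · intro h
    by_cases hws : w = G.sink
    · subst hws
      exact ⟨Ne.symm hvs, Relation.ReflTransGen.refl⟩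
    · have h1 : assign1 G v w ≠ some true := by
        intro hc
        exact h ⟨(w, true), mem_clauseOf.mpr (Or.inr ⟨hws, rfl⟩), hc⟩
      have h2 : assign1 G v w = none := by
        rcases h3 : assign1 G v w with _ | b
        · rfl
        · cases b
          · exact absurd h3 (assign1_ne_false hG hvs)
          · exact absurd h3 h1
      rcases (assign1_eq_none hG hvs).mp h2 with ⟨ha, _, hb⟩
      exact ⟨ha, hb⟩
  · rintro ⟨hwv, hreach⟩ ⟨l, hl, hsat⟩
    rcases mem_clauseOf.mp hl with ⟨h2, _⟩ | ⟨hws, heq⟩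
    · rw [h2] at hsat
      exact assign1_ne_false hG hvs hsat
    · have e1 : l.1 = w := by rw [heq]
      have e2 : l.2 = true := by rw [heq]
      rw [e1, e2, (assign1_eq_none hG hvs).mpr ⟨hwv, hws, hreach⟩] at hsat
      simp at hsat

include hG hv hvs in
lemma filter1_eq {w : ℕ} (hw : w ∈ G.verts) (hwv : w ≠ v)
    (hreach : Reach (deleteVert G v) w G.sink) :
    (ClauseOf G w).filter (fun l => assign1 G v l.1 = none) = ClauseOf (restrict1 G v) w := by
  ext l
  have hsink : (restrict1 G v).sink = G.sink := rfl
  simp only [Finset.mem_filter, mem_clauseOf, assign1_eq_none hG hvs, hsink]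
  constructor
  · rintro ⟨⟨h2, he⟩ | ⟨hws, rfl⟩, hl1, hl2, hl3⟩
    · exact Or.inl ⟨h2, mem_restrict1_edges.mpr ⟨he, hl1, hwv, hl3, hreach⟩⟩
    · exact Or.inr ⟨hws, rfl⟩
  · rintro (⟨h2, he⟩ | ⟨hws, rfl⟩)
    · rw [mem_restrict1_edges] at he
      obtain ⟨he, h1v, _, h1r, _⟩ := he
      exact ⟨Or.inl ⟨h2, he⟩, h1v, edge_ne_sink hG he, h1r⟩
    · exact ⟨Or.inr ⟨hws, rfl⟩, hwv, hws, hreach⟩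

include hG hv hvs in
lemma part1 : restrictSet (assign1 G v) (Peb G) = Peb (restrict1 G v) := by
  ext D
  constructor
  · rintro ⟨C, ⟨w, hw, rfl⟩, hunsat, rfl⟩
    have hw' : w ∈ G.verts := hw
    obtain ⟨hwv, hreach⟩ := (unsat1_iff hG hv hvs hw').mp hunsat
    exact ⟨w, mem_restrict1_verts.mpr ⟨hw', hwv, hreach⟩,
      (filter1_eq hG hv hvs hw' hwv hreach).symm⟩
  · rintro ⟨w, hw, rfl⟩
    obtain ⟨hw', hwv, hreach⟩ := mem_restrict1_verts.mp hw
    exact ⟨ClauseOf G w, ⟨w, hw', rfl⟩, (unsat1_iff hG hv hvs hw').mpr ⟨hwv, hreach⟩,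
      (filter1_eq hG hv hvs hw' hwv hreach).symm⟩

end Part1
/-- Peb(G)↾[[v := b]] = Peb(G[v := b]), for b = 0 (independently of the chosen path)
and for b = 1. -/
theorem peb_restriction (G : PGraph) (hG : IsPointed G)
    (v : ℕ) (hv : v ∈ G.verts) (hvs : v ≠ G.sink) :
    (∀ π : List ℕ, IsPathToSink G π v →
      restrictSet (assign0 G v π) (Peb G) = Peb (restrict0 G v)) ∧
    restrictSet (assign1 G v) (Peb G) = Peb (restrict1 G v) := by
  exact ⟨fun π hπ => part0 hG hv hvs hπ, part1 hG hv hvs⟩
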